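/- (First ascent step increases the greedy-action probability.) Fix a horizon H ≥ 2, a damage rate κ > 0, a reward exponent β ∈ (0,1], effort levels 0 < e_L < e_H ≤ 1 with κ·H·e_H ≤ 1, and a learning rate α > 0. Suppose the commitment condition e_H^β − e_L^β > 2(H−1)·κ·ē_β·(e_H − e_L) holds, where ē_β = (e_L^β + e_H^β)/2. Let J(θ) = σ(θ)·Q(e_H) + (1 − σ(θ))·Q(e_L), with σ the logistic sigmoid and Q(e) = e^β + V(κe) for V the uniform-policy continuation value, and let θ₁ = α·J'(0) be the parameter after one gradient-ascent step from θ₀ = 0. Then σ(θ₁) > 1/2. -/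

import Mathlib

/-- Continuation return along effort sequence `e` from initial damage `d`. -/
noncomputable def contReturn (H : ℕ) (κ β : ℝ) (e : ℕ → ℝ) (d : ℝ) : ℝ :=
  ∑ t ∈ Finset.range (H - 1),
    (e t) ^ β * (1 - (d + κ * ∑ s ∈ Finset.range t, e s)) ^ 2

/-- Uniform-policy continuation value: the average of `contReturn` over all
`2^(H-1)` effort sequences with values in `{eL, eH}`, encoded by
`c : Fin (H-1) → Bool` (`true ↦ eH`, `false ↦ eL`). -/
noncomputable def contValue (H : ℕ) (κ β eL eH : ℝ) (d : ℝ) : ℝ :=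
  (2 : ℝ) ^ (-((H : ℤ) - 1)) *
    ∑ c : Fin (H - 1) → Bool,
      contReturn H κ β
        (fun t => if ht : t < H - 1 then (if c ⟨t, ht⟩ then eH else eL) else 0) d

/-- State-action value at zero damage: `Q(e) = e^β + V(κ e)`. -/
noncomputable def Qval (H : ℕ) (κ β eL eH : ℝ) (e : ℝ) : ℝ :=
  e ^ β + contValue H κ β eL eH (κ * e)

/-- The logistic sigmoid `σ(θ) = 1 / (1 + exp(-θ))`. -/
noncomputable def sigmoid (θ : ℝ) : ℝ := 1 / (1 + Real.exp (-θ))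

open Finset

lemma sum_pi_bool {n : ℕ} (t : Fin n) (f : Bool → ℝ) :
    ∑ c : Fin n → Bool, f (c t) = 2 ^ (n - 1) * (f true + f false) := by
  classical
  rw [← Equiv.sum_comp (Equiv.funSplitAt t Bool).symm (fun c => f (c t))]
  have h : ∀ p : Bool × ({ j : Fin n // j ≠ t } → Bool),
      ((Equiv.funSplitAt t Bool).symm p) t = p.1 := by
    intro p; simp [Equiv.funSplitAt, Equiv.piSplitAt]
  simp only [h]
  rw [Fintype.sum_prod_type]
  simp [Fintype.sum_bool, Finset.sum_const, Fintype.card_fun, Fintype.card_subtype_compl,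
    mul_comm, mul_add]
  ring_nf

lemma sigmoid_gt_half {x : ℝ} (hx : 0 < x) : sigmoid x > 1 / 2 := by
  have he : Real.exp (-x) < 1 := Real.exp_lt_one_iff.2 (by linarith)
  have h0 : 0 < 1 + Real.exp (-x) := by positivity
  rw [sigmoid, gt_iff_lt, lt_div_iff₀ h0]
  linarith

lemma sigmoid_hasDerivAt : HasDerivAt sigmoid (1/4) 0 := by
  have h1 : HasDerivAt (fun θ : ℝ => 1 + Real.exp (-θ)) (-1) 0 := by
    simpa using ((hasDerivAt_id (0:ℝ)).neg.exp.const_add 1)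
  have hne : (1 : ℝ) + Real.exp (-(0:ℝ)) ≠ 0 := by positivity
  have h2 := h1.inv hne
  have h3 : -(-1) / (1 + Real.exp (-(0:ℝ))) ^ 2 = 1/4 := by
    simp [Real.exp_zero]; norm_num
  rw [h3] at h2
  have h4 : HasDerivAt (fun θ : ℝ => 1 / (1 + Real.exp (-θ))) (1/4) 0 := by
    simp only [one_div] at h2 ⊢; exact h2
  exact h4

lemma Qval_lt (H : ℕ) (hH : 2 ≤ H) (κ β eL eH : ℝ)
    (hκ : 0 < κ) (hβ0 : 0 < β) (heL : 0 < eL) (hLH : eL < eH)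
    (hcommit : eH ^ β - eL ^ β >
      2 * ((H : ℝ) - 1) * κ * ((eL ^ β + eH ^ β) / 2) * (eH - eL)) :
    Qval H κ β eL eH eL < Qval H κ β eL eH eH := by
  classical
  set n := H - 1 with hn
  have hn1 : 1 ≤ n := by omega
  set E : (Fin n → Bool) → ℕ → ℝ :=
    fun c t => if ht : t < n then (if c ⟨t, ht⟩ then eH else eL) else 0 with hE
  have hEnn : ∀ c t, 0 ≤ E c t := by
    intro c t
    by_cases ht : t < n
    · simp only [hE, dif_pos ht]
      split <;> linarith
    · simp [hE, ht]
  -- per-sequence bound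
  have key : ∀ c : Fin n → Bool,
      contReturn H κ β (E c) (κ * eL) - contReturn H κ β (E c) (κ * eH)
        ≤ ∑ t ∈ range n, 2 * κ * (eH - eL) * (E c t) ^ β := by
    intro c
    rw [contReturn, contReturn, ← Finset.sum_sub_distrib]
    apply Finset.sum_le_sum
    intro t _
    set x : ℝ := κ * ∑ s ∈ range t, E c s with hx
    have hxnn : 0 ≤ x := by
      apply mul_nonneg hκ.le
      exact Finset.sum_nonneg fun s _ => hEnn c s
    have hAnn : (0:ℝ) ≤ (E c t) ^ β := Real.rpow_nonneg (hEnn c t) β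
    have hsq : (1 - (κ * eL + x)) ^ 2 - (1 - (κ * eH + x)) ^ 2 ≤ 2 * κ * (eH - eL) := by
      nlinarith [mul_nonneg (mul_nonneg hκ.le hκ.le)
          (mul_nonneg (sub_nonneg.2 hLH.le) (by linarith : (0:ℝ) ≤ eL + eH)),
        mul_nonneg (mul_nonneg hκ.le (sub_nonneg.2 hLH.le)) hxnn]
    calc (E c t) ^ β * (1 - (κ * eL + x)) ^ 2 - (E c t) ^ β * (1 - (κ * eH + x)) ^ 2
        = (E c t) ^ β * ((1 - (κ * eL + x)) ^ 2 - (1 - (κ * eH + x)) ^ 2) := by ring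
      _ ≤ (E c t) ^ β * (2 * κ * (eH - eL)) := mul_le_mul_of_nonneg_left hsq hAnn
      _ = 2 * κ * (eH - eL) * (E c t) ^ β := by ring
  -- total sum identity
  have hS : ∑ c : Fin n → Bool, ∑ t ∈ range n, (E c t) ^ β
      = (n : ℝ) * (2 ^ (n - 1) * (eH ^ β + eL ^ β)) := by
    rw [Finset.sum_comm]
    have hrow : ∀ t ∈ range n, ∑ c : Fin n → Bool, (E c t) ^ β
        = 2 ^ (n - 1) * (eH ^ β + eL ^ β) := by
      intro t ht
      have ht' : t < n := mem_range.1 ht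
      have h1 : ∀ c : Fin n → Bool, (E c t) ^ β
          = (fun b => if b then eH ^ β else eL ^ β) (c ⟨t, ht'⟩) := by
        intro c
        simp only [hE, dif_pos ht']
        split <;> rfl
      rw [Finset.sum_congr rfl fun c _ => h1 c]
      exact (sum_pi_bool ⟨t, ht'⟩ (fun b => if b then eH ^ β else eL ^ β)).trans (by norm_num)
    rw [Finset.sum_congr rfl hrow, Finset.sum_const, card_range, nsmul_eq_mul]
  have hsum := Finset.sum_le_sum (fun c (_ : c ∈ (univ : Finset (Fin n → Bool))) => key c)
  -- hsum : ∑ c, (CR c dL - CR c dH) ≤ ∑ c, ∑ t, 2κ(eH-eL)(E c t)^β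
  have hsum2 : ∑ c : Fin n → Bool, (contReturn H κ β (E c) (κ * eL)
        - contReturn H κ β (E c) (κ * eH))
      ≤ 2 * κ * (eH - eL) * ((n : ℝ) * (2 ^ (n - 1) * (eH ^ β + eL ^ β))) := by
    calc _ ≤ ∑ c : Fin n → Bool, ∑ t ∈ range n, 2 * κ * (eH - eL) * (E c t) ^ β := hsum
      _ = 2 * κ * (eH - eL) * ∑ c : Fin n → Bool, ∑ t ∈ range n, (E c t) ^ β := by
          rw [Finset.mul_sum]; exact Finset.sum_congr rfl fun c _ => by rw [Finset.mul_sum]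
      _ = _ := by rw [hS]
  -- contValue difference
  have hzpow : (2 : ℝ) ^ (-((H : ℤ) - 1)) = ((2:ℝ) ^ n)⁻¹ := by
    have : -((H : ℤ) - 1) = -(n : ℤ) := by omega
    rw [this, zpow_neg, zpow_natCast]
  have h2n : (2:ℝ) ^ n = 2 * 2 ^ (n - 1) := by
    rw [← pow_succ']; congr 1; omega
  have hpow_pos : (0:ℝ) < 2 ^ n := by positivity
  have hV : contValue H κ β eL eH (κ * eL) - contValue H κ β eL eH (κ * eH)
      ≤ 2 * ((H:ℝ) - 1) * κ * ((eL ^ β + eH ^ β) / 2) * (eH - eL) := by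
    rw [contValue, contValue, ← mul_sub, ← Finset.sum_sub_distrib, hzpow]
    have hHn : ((H:ℝ) - 1) = (n : ℝ) := by
      have : (n:ℝ) = (H:ℝ) - 1 := by
        rw [hn]; push_cast [Nat.cast_sub (by omega : 1 ≤ H)]; ring
      linarith
    rw [hHn]
    calc ((2:ℝ) ^ n)⁻¹ * ∑ c : Fin n → Bool, (contReturn H κ β (E c) (κ * eL)
            - contReturn H κ β (E c) (κ * eH))
        ≤ ((2:ℝ) ^ n)⁻¹ * (2 * κ * (eH - eL) * ((n : ℝ) * (2 ^ (n - 1) * (eH ^ β + eL ^ β)))) :=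
          mul_le_mul_of_nonneg_left hsum2 (by positivity)
      _ = 2 * (n:ℝ) * κ * ((eL ^ β + eH ^ β) / 2) * (eH - eL) := by
          rw [h2n]; field_simp; ring
  rw [Qval, Qval]
  have : contValue H κ β eL eH (κ * eL) - contValue H κ β eL eH (κ * eH)
      < eH ^ β - eL ^ β := lt_of_le_of_lt hV hcommit
  linarith

theorem stmt_9 (H : ℕ) (hH : 2 ≤ H) (κ β eL eH α : ℝ)
    (hκ : 0 < κ) (hβ0 : 0 < β) (hβ1 : β ≤ 1)
    (heL : 0 < eL) (hLH : eL < eH) (heH : eH ≤ 1)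
    (hbound : κ * (H : ℝ) * eH ≤ 1) (hα : 0 < α)
    (hcommit : eH ^ β - eL ^ β >
      2 * ((H : ℝ) - 1) * κ * ((eL ^ β + eH ^ β) / 2) * (eH - eL)) :
    sigmoid (α * deriv (fun θ : ℝ =>
      sigmoid θ * Qval H κ β eL eH eH + (1 - sigmoid θ) * Qval H κ β eL eH eL) 0)
      > 1 / 2 := by
  have hQ := Qval_lt H hH κ β eL eH hκ hβ0 heL hLH hcommit
  set QH := Qval H κ β eL eH eH
  set QL := Qval H κ β eL eH eL
  have hf : HasDerivAt (fun θ : ℝ => sigmoid θ * QH + (1 - sigmoid θ) * QL)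
      ((1/4) * QH + (-(1/4)) * QL) 0 :=
    (sigmoid_hasDerivAt.mul_const QH).add ((sigmoid_hasDerivAt.const_sub 1).mul_const QL)
  rw [hf.deriv]
  apply sigmoid_gt_half
  have : (0:ℝ) < (1/4) * QH + (-(1/4)) * QL := by linarith
  exact mul_pos hα this
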